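/- Let n ≥ 1 and let d_1, ..., d_n be pairwise distinct real numbers. Let Q be the n × n matrix with entries q_{ii} = -d_i, q_{i,i-1} = d_i for i ≥ 2, and q_{ij} = 0 otherwise, and define the n × n matrices R = (r_{ij}) and L = (l_{ij}) by r_{ij} = l_{ij} = 0 for i < j, r_{ij} = Π_{l=j+1}^{i} d_l/(d_l - d_j) and l_{ij} = Π_{l=j}^{i-1} d_{l+1}/(d_l - d_i) for i ≥ j. Then for every t ∈ ℝ and all indices i, j, the (i, j) entry of the matrix exponential exp(tQ) equals Σ_{k=j}^{i} e^{-d_k t} r_{ik} l_{kj}. -/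

import Mathlib

/-- **Spectral decomposition of a pure death process.**
Let `d_1, …, d_n` (`n ≥ 1`, here indexed by `Fin (n+1)`) be pairwise distinct real
numbers, `Q` the generator matrix with `q_{ii} = -d_i`, `q_{i,i-1} = d_i` and
`q_{ij} = 0` otherwise, and `R`, `L` the triangular matrices with `r_{ij} = l_{ij} = 0`
for `i < j`, `r_{ij} = Π_{l=j+1}^i d_l/(d_l - d_j)` and
`l_{ij} = Π_{l=j}^{i-1} d_{l+1}/(d_l - d_i)` for `i ≥ j`.  Then for every `t ∈ ℝ`
and all `i, j`, the `(i, j)` entry of `exp(tQ)` equals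
`Σ_{k=j}^i e^{-d_k t} r_{ik} l_{kj}`. -/
theorem stmt_18 (n : ℕ) (d : Fin (n + 1) → ℝ) (hd : Function.Injective d)
    (Q R L : Matrix (Fin (n + 1)) (Fin (n + 1)) ℝ)
    (hQ : ∀ i j, Q i j =
      if i = j then -d i else if (i : ℕ) = (j : ℕ) + 1 then d i else 0)
    (hR : ∀ i j, R i j =
      if j ≤ i then ∏ l ∈ Finset.Ioc j i, d l / (d l - d j) else 0)
    (hL : ∀ i j, L i j =
      if j ≤ i then ∏ l ∈ Finset.Ico j i, d (l + 1) / (d l - d i) else 0) :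
    ∀ (t : ℝ) (i j : Fin (n + 1)),
      NormedSpace.exp (t • Q) i j
        = ∑ k ∈ Finset.Icc j i, Real.exp (-d k * t) * R i k * L k j := by
  classical
  have hd' : ∀ {a b : Fin (n + 1)}, a ≠ b → d a - d b ≠ 0 := fun h =>
    sub_ne_zero.2 fun he => h (hd he)
  set D : Matrix (Fin (n + 1)) (Fin (n + 1)) ℝ := Matrix.diagonal (fun k => -d k) with hDdef
  have hR0 : ∀ i j : Fin (n + 1), i < j → R i j = 0 := fun i j h => by
    rw [hR, if_neg (not_le.mpr h)]
  have hL0 : ∀ i j : Fin (n + 1), i < j → L i j = 0 := fun i j h => by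
    rw [hL, if_neg (not_le.mpr h)]
  have hRd : ∀ i, R i i = 1 := fun i => by
    rw [hR, if_pos le_rfl, Finset.Ioc_self, Finset.prod_empty]
  have hLd : ∀ i, L i i = 1 := fun i => by
    rw [hL, if_pos le_rfl, Finset.Ico_self, Finset.prod_empty]
  -- recurrences
  have hRrec : ∀ i i' j : Fin (n + 1), (i : ℕ) = (i' : ℕ) + 1 → j < i →
      R i j = R i' j * (d i / (d i - d j)) := by
    intro i i' j hm h
    have hji' : j ≤ i' := by rw [Fin.le_def]; rw [Fin.lt_def] at h; omega
    have hsplit : Finset.Ioc j i = insert i (Finset.Ioc j i') := by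
      ext k
      simp only [Finset.mem_Ioc, Finset.mem_insert, Fin.lt_def, Fin.le_def, Fin.ext_iff]
      omega
    have hnot : i ∉ Finset.Ioc j i' := by
      simp only [Finset.mem_Ioc, Fin.lt_def, Fin.le_def]
      omega
    rw [hR, hR, if_pos (le_of_lt h), if_pos hji', hsplit, Finset.prod_insert hnot]
    ring
  have hLrec : ∀ i j j' : Fin (n + 1), (j' : ℕ) = (j : ℕ) + 1 → j < i →
      L i j = d j' / (d j - d i) * L i j' := by
    intro i j j' hm h
    have hj'i : j' ≤ i := by rw [Fin.le_def]; rw [Fin.lt_def] at h; omega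
    have hsplit : Finset.Ico j i = insert j (Finset.Ico j' i) := by
      ext k
      simp only [Finset.mem_Ico, Finset.mem_insert, Fin.lt_def, Fin.le_def, Fin.ext_iff]
      omega
    have hnot : j ∉ Finset.Ico j' i := by
      simp only [Finset.mem_Ico, Fin.lt_def, Fin.le_def]
      omega
    have hjadd : j + 1 = j' := by
      rw [Fin.ext_iff, Fin.val_add_one_of_lt]
      · omega
      · rw [Fin.lt_def]; rw [Fin.lt_def] at h
        have := i.isLt
        simp only [Fin.val_last]
        omega
    rw [hL, hL, if_pos (le_of_lt h), if_pos hj'i, hsplit, Finset.prod_insert hnot, hjadd]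
  -- Q * R = R * D
  have hQR : Q * R = R * D := by
    ext i j
    rw [Matrix.mul_apply, hDdef, Matrix.mul_diagonal]
    have hterm : ∀ k : Fin (n + 1), Q i k * R k j =
        (if i = k then -d i * R k j else 0) +
          (if (i : ℕ) = (k : ℕ) + 1 then d i * R k j else 0) := by
      intro k
      rw [hQ]
      by_cases h1 : i = k
      · subst h1; simp
      · rw [if_neg h1, if_neg h1, zero_add]
        split_ifs with h2 <;> simp
    rw [Finset.sum_congr rfl fun k _ => hterm k, Finset.sum_add_distrib,
      Finset.sum_ite_eq, if_pos (Finset.mem_univ i)]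
    by_cases hi : (i : ℕ) = 0
    · rw [Finset.sum_eq_zero (fun k _ => if_neg (by omega)), add_zero]
      rcases eq_or_ne j i with h | h
      · subst h; ring
      · have hij : i < j := by
          rw [Fin.lt_def]; rw [ne_eq, Fin.ext_iff] at h; omega
        rw [hR0 i j hij]; ring
    · obtain ⟨m, hm⟩ : ∃ m, (i : ℕ) = m + 1 := ⟨(i : ℕ) - 1, by omega⟩
      have hmlt : m < n + 1 := by have := i.isLt; omega
      set i' : Fin (n + 1) := ⟨m, hmlt⟩ with hi'
      have hcond : ∀ k : Fin (n + 1), ((i : ℕ) = (k : ℕ) + 1) ↔ k = i' := by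
        intro k; rw [Fin.ext_iff]; simp only [hi']; omega
      simp only [hcond]
      rw [Finset.sum_ite_eq', if_pos (Finset.mem_univ i')]
      have hi'm : (i : ℕ) = (i' : ℕ) + 1 := hm
      rcases lt_trichotomy j i with h | h | h
      · rw [hRrec i i' j hi'm h]
        have hij : d i - d j ≠ 0 := hd' (ne_of_gt h)
        field_simp
        ring
      · rw [h, hRd, hR0 i' i (by rw [Fin.lt_def]; omega)]
        ring
      · rw [hR0 i j h, hR0 i' j (by rw [Fin.lt_def]; rw [Fin.lt_def] at h; omega)]
        ring
  -- L * Q = D * L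
  have hLQ : L * Q = D * L := by
    ext i j
    rw [Matrix.mul_apply, hDdef, Matrix.diagonal_mul]
    have hterm : ∀ k : Fin (n + 1), L i k * Q k j =
        (if k = j then L i k * -d j else 0) +
          (if (k : ℕ) = (j : ℕ) + 1 then L i k * d k else 0) := by
      intro k
      rw [hQ]
      by_cases h1 : k = j
      · subst h1; simp
      · rw [if_neg h1, if_neg h1, zero_add]
        split_ifs with h2 <;> simp
    rw [Finset.sum_congr rfl fun k _ => hterm k, Finset.sum_add_distrib,
      Finset.sum_ite_eq', if_pos (Finset.mem_univ j)]
    by_cases hj : (j : ℕ) = n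
    · rw [Finset.sum_eq_zero (fun k _ => if_neg (by have := k.isLt; omega)), add_zero]
      rcases eq_or_ne j i with h | h
      · subst h; ring
      · have hij : i < j := by
          rw [Fin.lt_def]; rw [ne_eq, Fin.ext_iff] at h
          have := i.isLt; omega
        rw [hL0 i j hij]; ring
    · have hjlt : (j : ℕ) + 1 < n + 1 := by have := j.isLt; omega
      set j' : Fin (n + 1) := ⟨(j : ℕ) + 1, hjlt⟩ with hj'
      have hcond : ∀ k : Fin (n + 1), ((k : ℕ) = (j : ℕ) + 1) ↔ k = j' := by
        intro k; rw [Fin.ext_iff]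
      simp only [hcond]
      rw [Finset.sum_ite_eq', if_pos (Finset.mem_univ j')]
      have hj'm : (j' : ℕ) = (j : ℕ) + 1 := rfl
      rcases lt_trichotomy j i with h | h | h
      · rw [hLrec i j j' hj'm h]
        have hij : d j - d i ≠ 0 := hd' (ne_of_lt h)
        field_simp
        ring
      · rw [← h, hLd, hL0 j j' (by rw [Fin.lt_def]; omega)]
        ring
      · rw [hL0 i j h, hL0 i j' (by rw [Fin.lt_def]; rw [Fin.lt_def] at h; omega)]
        ring
  -- L * R = 1
  have hLR : L * R = 1 := by
    have hcomm : L * R * D = D * (L * R) := by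
      calc L * R * D = L * (R * D) := by rw [mul_assoc]
        _ = L * (Q * R) := by rw [hQR]
        _ = L * Q * R := by rw [mul_assoc]
        _ = D * L * R := by rw [hLQ]
        _ = D * (L * R) := by rw [mul_assoc]
    ext i j
    rcases eq_or_ne i j with h | h
    · subst h
      rw [Matrix.mul_apply, Matrix.one_apply_eq]
      rw [Finset.sum_eq_single i]
      · rw [hLd, hRd, mul_one]
      · intro k _ hk
        rcases lt_or_gt_of_ne hk with hlt | hgt
        · rw [hR0 k i hlt, mul_zero]
        · rw [hL0 i k hgt, zero_mul]
      · intro hmem; exact absurd (Finset.mem_univ i) hmem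
    · have hentry : (L * R * D) i j = (D * (L * R)) i j := by rw [hcomm]
      rw [hDdef, Matrix.mul_diagonal, Matrix.diagonal_mul] at hentry
      have h2 : (d i - d j) * ((L * R) i j) = 0 := by
        have : (L * R) i j * -d j = -d i * (L * R) i j := hentry
        nlinarith [this]
      rw [Matrix.one_apply_ne h]
      exact (mul_eq_zero.1 h2).resolve_left (hd' h)
  have hRL : R * L = 1 := mul_eq_one_comm.mp hLR
  have hQeq : Q = R * D * L := by
    calc Q = Q * (R * L) := by rw [hRL, mul_one]
      _ = Q * R * L := by rw [mul_assoc]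
      _ = R * D * L := by rw [hQR]
  intro t i j
  have hTD : t • D = Matrix.diagonal (fun k => t * -d k) := by
    rw [hDdef]
    ext a b
    by_cases h : a = b <;> simp [Matrix.diagonal_apply, h]
  have hsm : t • Q = R * Matrix.diagonal (fun k => t * -d k) * L := by
    calc t • Q = t • (R * D * L) := by rw [hQeq]
      _ = (t • (R * D)) * L := by rw [smul_mul_assoc]
      _ = (R * (t • D)) * L := by rw [mul_smul_comm]
      _ = R * Matrix.diagonal (fun k => t * -d k) * L := by rw [hTD]
  set U : (Matrix (Fin (n + 1)) (Fin (n + 1)) ℝ)ˣ := ⟨R, L, hRL, hLR⟩ with hU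
  have hexp : NormedSpace.exp (R * Matrix.diagonal (fun k => t * -d k) * L) =
      R * Matrix.diagonal (fun k => Real.exp (-d k * t)) * L := by
    have h1 := Matrix.exp_units_conj U (Matrix.diagonal (fun k => t * -d k))
    have hUc : (U : Matrix (Fin (n + 1)) (Fin (n + 1)) ℝ) = R := rfl
    have hUinv : ((U⁻¹ : (Matrix (Fin (n + 1)) (Fin (n + 1)) ℝ)ˣ) :
        Matrix (Fin (n + 1)) (Fin (n + 1)) ℝ) = L := rfl
    rw [hUc, hUinv] at h1
    rw [h1, Matrix.exp_diagonal, Pi.exp_def]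
    have hfg : (fun k : Fin (n + 1) => NormedSpace.exp (t * -d k)) =
        fun k => Real.exp (-d k * t) := by
      funext k
      rw [← Real.exp_eq_exp_ℝ]
      ring_nf
    rw [hfg]
  rw [hsm, hexp, Matrix.mul_apply]
  simp only [Matrix.mul_diagonal]
  rw [← Finset.sum_subset (Finset.subset_univ (Finset.Icc j i))]
  · apply Finset.sum_congr rfl
    intro k _
    ring
  · intro k _ hk
    simp only [Finset.mem_Icc, not_and_or, not_le] at hk
    rcases hk with h | h
    · rw [hL0 k j h, mul_zero]
    · rw [hR0 i k h, zero_mul, zero_mul]
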